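/- arXiv:2004.05987 — 4 statements merged into one kernel-verified Lean document; each statement's English description precedes it below -/
import Mathlib

section
/- Let A > 0 and φ ∈ ℝ. Define q_s(x,t) = A / (1 - exp(-A·x - i·A²·t + i·φ)). Then at every point (x,t) ∈ ℝ² at which exp(-A·x - i·A²·t + i·φ) ≠ 1 and exp(A·x - i·A²·t + i·φ) ≠ 1, the function q_s satisfies the NNLS equation: i·∂ₜq_s(x,t) + ∂ₓₓq_s(x,t) + 2·q_s(x,t)²·conj(q_s(-x,t)) = 0. -/
noncomputable section

/-- The one-soliton solution of the NNLS equation: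
`q_s(x,t) = A / (1 - exp(-A·x - i·A²·t + i·φ))`. -/
def qs (A φ : ℝ) (x t : ℝ) : ℂ :=
  (A : ℂ) / (1 - Complex.exp (-(A : ℂ) * x - Complex.I * (A : ℂ) ^ 2 * t + Complex.I * φ))

def qgen (a b c : ℂ) (y : ℝ) : ℂ := a / (1 - Complex.exp (b * y + c))

lemma exp_hasDerivAt (b c : ℂ) (x : ℝ) :
    HasDerivAt (fun y : ℝ => Complex.exp (b * y + c)) (Complex.exp (b * x + c) * b) x := by
  have h : HasDerivAt (fun z : ℂ => Complex.exp (b * z + c))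
      (Complex.exp (b * (x : ℂ) + c) * b) (x : ℂ) := by
    simpa using (((hasDerivAt_id (x : ℂ)).const_mul b).add_const c).cexp
  exact h.comp_ofReal

lemma qgen_hasDerivAt (a b c : ℂ) (y : ℝ)
    (h : 1 - Complex.exp (b * y + c) ≠ 0) :
    HasDerivAt (qgen a b c)
      (a * b * Complex.exp (b * y + c) / (1 - Complex.exp (b * y + c)) ^ 2) y := by
  have hd := ((hasDerivAt_const (y : ℝ) (1 : ℂ)).sub (exp_hasDerivAt b c y))
  have := ((hasDerivAt_const (y : ℝ) a).div hd h)
  convert this using 1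
  have he : Complex.exp (b * y + c) ≠ 0 := Complex.exp_ne_zero _
  · rfl
  · rfl
  simp only [Pi.sub_apply, Pi.mul_apply]
  field_simp
  ring

lemma qgen_deriv_hasDerivAt (a b c : ℂ) (y : ℝ)
    (h : 1 - Complex.exp (b * y + c) ≠ 0) :
    HasDerivAt (fun y' : ℝ =>
        a * b * Complex.exp (b * y' + c) / (1 - Complex.exp (b * y' + c)) ^ 2)
      (a * b ^ 2 * Complex.exp (b * y + c) * (1 + Complex.exp (b * y + c))
        / (1 - Complex.exp (b * y + c)) ^ 3) y := by
  have hnum := (exp_hasDerivAt b c y).const_mul (a * b)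
  have hd1 := (hasDerivAt_const (y : ℝ) (1 : ℂ)).sub (exp_hasDerivAt b c y)
  have hden := hd1.mul hd1
  have hden2 : (1 - Complex.exp (b * y + c)) * (1 - Complex.exp (b * y + c)) ≠ 0 :=
    mul_ne_zero h h
  have hfe : (fun y' : ℝ =>
      a * b * Complex.exp (b * y' + c) / (1 - Complex.exp (b * y' + c)) ^ 2)
      = fun y' : ℝ => a * b * Complex.exp (b * y' + c)
        / ((1 - Complex.exp (b * y' + c)) * (1 - Complex.exp (b * y' + c))) := by
    funext y'; rw [sq]
  rw [hfe]
  have := hnum.div hden hden2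
  convert this using 1
  · rfl
  · rfl
  simp only [Pi.sub_apply, Pi.mul_apply]
  field_simp
  ring

lemma nnls_alg (a w : ℂ) (h1 : 1 - w ≠ 0) :
    a ^ 3 * w / (1 - w) ^ 2 + a * (-a) ^ 2 * w * (1 + w) / (1 - w) ^ 3
      + 2 * (a / (1 - w)) ^ 2 * (a / (-(1 - w) / w)) = 0 := by
  rw [div_add_div _ _ (pow_ne_zero 2 h1) (pow_ne_zero 3 h1)]
  rw [div_pow, div_div_eq_mul_div, div_neg, mul_div_assoc']
  rw [mul_comm ((2 : ℂ) * a ^ 2 / (1 - w) ^ 2) _]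
  rw [neg_mul, div_mul_div_comm, ← neg_div]
  rw [div_add_div _ _ (mul_ne_zero (pow_ne_zero 2 h1) (pow_ne_zero 3 h1))
    (mul_ne_zero h1 (pow_ne_zero 2 h1))]
  rw [div_eq_zero_iff]
  left
  ring

/-- At every point where the two relevant denominators do not vanish, `q_s` satisfies the
nonlocal nonlinear Schrödinger equation
`i·∂ₜ q + ∂ₓₓ q + 2·q(x,t)²·conj(q(-x,t)) = 0`. -/
theorem stmt0 (A φ : ℝ) (hA : 0 < A) (x t : ℝ)
    (h1 : Complex.exp (-(A : ℂ) * x - Complex.I * (A : ℂ) ^ 2 * t + Complex.I * φ) ≠ 1)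
    (h2 : Complex.exp ((A : ℂ) * x - Complex.I * (A : ℂ) ^ 2 * t + Complex.I * φ) ≠ 1) :
    Complex.I * deriv (fun τ : ℝ => qs A φ x τ) t
      + deriv (fun y : ℝ => deriv (fun y' : ℝ => qs A φ y' t) y) x
      + 2 * (qs A φ x t) ^ 2 * (starRingEnd ℂ) (qs A φ (-x) t) = 0 := by
  set b1 : ℂ := -(A : ℂ) with hb1
  set c1 : ℂ := -(Complex.I * (A : ℂ) ^ 2 * t) + Complex.I * φ with hc1
  set b2 : ℂ := -(Complex.I * (A : ℂ) ^ 2) with hb2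
  set c2 : ℂ := -(A : ℂ) * x + Complex.I * φ with hc2
  -- rewrite qs as qgen in each direction
  have hqx : (fun y' : ℝ => qs A φ y' t) = qgen (A : ℂ) b1 c1 := by
    funext y; unfold qs qgen
    congr 2
    rw [hb1, hc1]; congr 1; ring
  have hqt : (fun τ : ℝ => qs A φ x τ) = qgen (A : ℂ) b2 c2 := by
    funext τ; unfold qs qgen
    congr 2
    rw [hb2, hc2]; congr 1; ring
  set e : ℂ := Complex.exp (b1 * x + c1) with he
  have hex : Complex.exp (-(A : ℂ) * x - Complex.I * (A : ℂ) ^ 2 * t + Complex.I * φ) = e := by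
    rw [he]; congr 1; ring
  have h1' : (1 : ℂ) - e ≠ 0 := sub_ne_zero.mpr (fun hh => h1 (by rw [hex, hh.symm]))
  have he0 : e ≠ 0 := Complex.exp_ne_zero _
  -- time derivative
  have het : Complex.exp (b2 * t + c2) = e := by
    rw [he]; congr 1; ring
  have hdt : deriv (fun τ : ℝ => qs A φ x τ) t
      = (A : ℂ) * b2 * e / (1 - e) ^ 2 := by
    rw [hqt]
    have := qgen_hasDerivAt (A : ℂ) b2 c2 t (by rw [het]; exact h1')
    rw [het] at this
    exact this.deriv
  -- space derivative (first), in a neighborhood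
  have hU : IsOpen {y : ℝ | 1 - Complex.exp (b1 * y + c1) ≠ 0} := by
    have hc : Continuous fun y : ℝ => 1 - Complex.exp (b1 * y + c1) := by
      continuity
    exact isOpen_compl_singleton.preimage hc
  have hxU : x ∈ {y : ℝ | 1 - Complex.exp (b1 * y + c1) ≠ 0} := h1'
  have hev : deriv (qgen (A : ℂ) b1 c1) =ᶠ[nhds x]
      (fun y : ℝ => (A : ℂ) * b1 * Complex.exp (b1 * y + c1)
        / (1 - Complex.exp (b1 * y + c1)) ^ 2) := by
    filter_upwards [hU.mem_nhds hxU] with y hy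
    exact (qgen_hasDerivAt (A : ℂ) b1 c1 y hy).deriv
  have hdxx : deriv (fun y : ℝ => deriv (fun y' : ℝ => qs A φ y' t) y) x
      = (A : ℂ) * b1 ^ 2 * e * (1 + e) / (1 - e) ^ 3 := by
    rw [hqx, hev.deriv_eq]
    have := qgen_deriv_hasDerivAt (A : ℂ) b1 c1 x h1'
    rw [← he] at this
    exact this.deriv
  -- the conjugate nonlocal term
  have hqsx : qs A φ x t = (A : ℂ) / (1 - e) := by
    unfold qs; rw [hex]
  have hconj : (starRingEnd ℂ) (qs A φ (-x) t) = (A : ℂ) / (1 - e⁻¹) := by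
    unfold qs
    rw [map_div₀, map_sub]
    congr 1
    · simp
    congr 1
    · simp
    rw [← Complex.exp_conj, ← Complex.exp_neg]
    congr 1
    have hA' : (starRingEnd ℂ) (A : ℂ) = (A : ℂ) := Complex.conj_ofReal A
    have ht' : (starRingEnd ℂ) (t : ℂ) = (t : ℂ) := Complex.conj_ofReal t
    have hφ' : (starRingEnd ℂ) (φ : ℂ) = (φ : ℂ) := Complex.conj_ofReal φ
    have hx' : (starRingEnd ℂ) (x : ℂ) = (x : ℂ) := Complex.conj_ofReal x
    simp only [map_add, map_sub, map_mul, map_neg, map_pow, Complex.conj_I, hA', ht', hφ', hx',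
      Complex.ofReal_neg, hb1, hc1]
    ring
  have hinv : (1 : ℂ) - e⁻¹ ≠ 0 := by
    rw [sub_ne_zero]
    intro hh
    apply h2
    have : e⁻¹ = (starRingEnd ℂ) (Complex.exp ((A : ℂ) * x - Complex.I * (A : ℂ) ^ 2 * t + Complex.I * φ)) := by
      rw [← Complex.exp_conj, ← Complex.exp_neg]
      congr 1
      simp only [map_add, map_sub, map_mul, map_pow, Complex.conj_I, Complex.conj_ofReal, hb1, hc1]
      ring
    rw [this] at hh
    have := congrArg (starRingEnd ℂ) hh
    simpa using this.symm
  rw [hdt, hdxx, hqsx, hconj]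
  have h4 : (1 : ℂ) - e⁻¹ = -(1 - e) / e := by field_simp; ring
  have hIb : Complex.I * ((A : ℂ) * b2 * e / (1 - e) ^ 2)
      = (A : ℂ) ^ 3 * e / (1 - e) ^ 2 := by
    rw [hb2]
    linear_combination (-(A : ℂ) ^ 3 * e / (1 - e) ^ 2) * Complex.I_mul_I
  rw [h4, hIb, hb1]
  exact nnls_alg (A : ℂ) e h1'
end
end

section
/- Let A > 0 and k ∈ ℝ \ {0}. Suppose q(y,0) = 0 for y < 0 and q(y,0) = A for y > 0. If a matrix function Ψ₁(·,0,k) satisfies the Jost integral equation (J1) at t = 0 for all x ≤ 0, then Ψ₁(x,0,k) = N₋(k) for all x ≤ 0; if Ψ₂(·,0,k) satisfies the Jost integral equation (J2) at t = 0 for all x ≥ 0, then Ψ₂(x,0,k) = N₊(k) for all x ≥ 0. Consequently the scattering matrix S(k) := Ψ₂(0,0,k)⁻¹ · Ψ₁(0,0,k) equals the matrix [[1 + A²/(4k²), -A/(2ik)], [A/(2ik), 1]], and det S(k) = 1. -/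
open MeasureTheory

noncomputable section

/-- `exp(c·σ₃)` where `σ₃ = diag(1,-1)`. -/
def expSigma3 (c : ℂ) : Matrix (Fin 2) (Fin 2) ℂ :=
  !![Complex.exp c, 0; 0, Complex.exp (-c)]

def Nplus (A : ℝ) (k : ℝ) : Matrix (Fin 2) (Fin 2) ℂ :=
  !![1, (A : ℂ) / (2 * Complex.I * k); 0, 1]

def Nminus (A : ℝ) (k : ℝ) : Matrix (Fin 2) (Fin 2) ℂ :=
  !![1, 0; (A : ℂ) / (2 * Complex.I * k), 1]

def Uplus (A : ℝ) : Matrix (Fin 2) (Fin 2) ℂ := !![0, (A : ℂ); 0, 0]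

def Uminus (A : ℝ) : Matrix (Fin 2) (Fin 2) ℂ := !![0, 0; -(A : ℂ), 0]

def Umat (q : ℝ → ℝ → ℂ) (x t : ℝ) : Matrix (Fin 2) (Fin 2) ℂ :=
  !![0, q x t; -(starRingEnd ℂ) (q (-x) t), 0]

def Phiplus (A : ℝ) (x t : ℝ) (k : ℝ) : Matrix (Fin 2) (Fin 2) ℂ :=
  Nplus A k * expSigma3 (-(Complex.I * k * x + 2 * Complex.I * k ^ 2 * t))

def Phiminus (A : ℝ) (x t : ℝ) (k : ℝ) : Matrix (Fin 2) (Fin 2) ℂ :=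
  Nminus A k * expSigma3 (-(Complex.I * k * x + 2 * Complex.I * k ^ 2 * t))

def Gplus (A : ℝ) (x y t : ℝ) (k : ℝ) : Matrix (Fin 2) (Fin 2) ℂ :=
  Phiplus A x t k * (Phiplus A y t k)⁻¹

def Gminus (A : ℝ) (x y t : ℝ) (k : ℝ) : Matrix (Fin 2) (Fin 2) ℂ :=
  Phiminus A x t k * (Phiminus A y t k)⁻¹

/-- The integrand of the Jost integral equation (J1). -/
def jostIntegrand1 (A : ℝ) (q : ℝ → ℝ → ℂ) (Ψ : ℝ → Matrix (Fin 2) (Fin 2) ℂ)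
    (x t k y : ℝ) : Matrix (Fin 2) (Fin 2) ℂ :=
  Gminus A x y t k * (Umat q y t - Uminus A) * Ψ y * expSigma3 (Complex.I * k * (x - y))

/-- The integrand of the Jost integral equation (J2). -/
def jostIntegrand2 (A : ℝ) (q : ℝ → ℝ → ℂ) (Ψ : ℝ → Matrix (Fin 2) (Fin 2) ℂ)
    (x t k y : ℝ) : Matrix (Fin 2) (Fin 2) ℂ :=
  Gplus A x y t k * (Umat q y t - Uplus A) * Ψ y * expSigma3 (Complex.I * k * (x - y))

/-- For pure-step initial data `q(·,0) = 0` on `(-∞,0)`, `= A` on `(0,∞)`: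
any solution of (J1) at `t = 0` equals `N₋(k)` for `x ≤ 0`, any solution of (J2) at `t = 0`
equals `N₊(k)` for `x ≥ 0`, and the scattering matrix `S(k) = Ψ₂(0,0,k)⁻¹·Ψ₁(0,0,k)` equals
`[[1 + A²/(4k²), -A/(2ik)], [A/(2ik), 1]]`, with `det S(k) = 1`. -/
theorem stmt1 (A : ℝ) (hA : 0 < A) (k : ℝ) (hk : k ≠ 0)
    (q : ℝ → ℝ → ℂ)
    (hq0 : ∀ y : ℝ, y < 0 → q y 0 = 0) (hqA : ∀ y : ℝ, 0 < y → q y 0 = (A : ℂ))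
    (Ψ₁ Ψ₂ : ℝ → Matrix (Fin 2) (Fin 2) ℂ)
    (hint1 : ∀ x : ℝ, x ≤ 0 → ∀ i j : Fin 2,
      IntegrableOn (fun y => jostIntegrand1 A q Ψ₁ x 0 k y i j) (Set.Iic x))
    (hJ1 : ∀ x : ℝ, x ≤ 0 → ∀ i j : Fin 2,
      Ψ₁ x i j = Nminus A k i j + ∫ y in Set.Iic x, jostIntegrand1 A q Ψ₁ x 0 k y i j)
    (hint2 : ∀ x : ℝ, 0 ≤ x → ∀ i j : Fin 2,
      IntegrableOn (fun y => jostIntegrand2 A q Ψ₂ x 0 k y i j) (Set.Ici x))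
    (hJ2 : ∀ x : ℝ, 0 ≤ x → ∀ i j : Fin 2,
      Ψ₂ x i j = Nplus A k i j - ∫ y in Set.Ici x, jostIntegrand2 A q Ψ₂ x 0 k y i j) :
    (∀ x : ℝ, x ≤ 0 → Ψ₁ x = Nminus A k) ∧
    (∀ x : ℝ, 0 ≤ x → Ψ₂ x = Nplus A k) ∧
    (Ψ₂ 0)⁻¹ * Ψ₁ 0 =
      !![1 + (A : ℂ) ^ 2 / (4 * (k : ℂ) ^ 2), -(A : ℂ) / (2 * Complex.I * k);
         (A : ℂ) / (2 * Complex.I * k), 1] ∧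
    ((Ψ₂ 0)⁻¹ * Ψ₁ 0).det = 1 := by

  have h0 : ∀ᵐ y : ℝ, y ≠ (0:ℝ) := by
    have := Real.volume_singleton (a := (0:ℝ))
    simpa [MeasureTheory.ae_iff] using this
  -- Ψ₁ on (-∞,0]
  have hUm : ∀ y : ℝ, y < 0 → Umat q y 0 - Uminus A = 0 := by
    intro y hy
    have h1 : q y 0 = 0 := hq0 y hy
    have h2 : q (-y) 0 = (A : ℂ) := hqA (-y) (by linarith)
    simp [Umat, Uminus, h1, h2]
  have hUp : ∀ y : ℝ, 0 < y → Umat q y 0 - Uplus A = 0 := by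
    intro y hy
    have h1 : q y 0 = (A : ℂ) := hqA y hy
    have h2 : q (-y) 0 = 0 := hq0 (-y) (by linarith)
    simp [Umat, Uplus, h1, h2]
  have hΨ1 : ∀ x : ℝ, x ≤ 0 → Ψ₁ x = Nminus A k := by
    intro x hx
    ext i j
    rw [hJ1 x hx i j]
    have hz : ∫ y in Set.Iic x, jostIntegrand1 A q Ψ₁ x 0 k y i j = 0 := by
      rw [MeasureTheory.setIntegral_congr_ae measurableSet_Iic
        (g := fun _ => (0:ℂ)) ?_, MeasureTheory.integral_zero]
      filter_upwards [h0] with y hy hyx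
      have hylt : y < 0 := lt_of_le_of_ne (le_trans hyx hx) hy
      simp [jostIntegrand1, hUm y hylt]
    rw [hz, add_zero]
  have hΨ2 : ∀ x : ℝ, 0 ≤ x → Ψ₂ x = Nplus A k := by
    intro x hx
    ext i j
    rw [hJ2 x hx i j]
    have hz : ∫ y in Set.Ici x, jostIntegrand2 A q Ψ₂ x 0 k y i j = 0 := by
      rw [MeasureTheory.setIntegral_congr_ae measurableSet_Ici
        (g := fun _ => (0:ℂ)) ?_, MeasureTheory.integral_zero]
      filter_upwards [h0] with y hy hyx
      have hylt : 0 < y := lt_of_le_of_ne (le_trans hx hyx) (Ne.symm hy)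
      simp [jostIntegrand2, hUp y hylt]
    rw [hz, sub_zero]
  refine ⟨hΨ1, hΨ2, ?_, ?_⟩
  · rw [hΨ1 0 le_rfl, hΨ2 0 le_rfl]
    have hki : (k : ℂ) ≠ 0 := by exact_mod_cast hk
    have hinv : (Nplus A k)⁻¹ = !![1, -((A : ℂ) / (2 * Complex.I * k)); 0, 1] := by
      rw [Matrix.inv_def]
      simp [Nplus, Matrix.adjugate_fin_two, Matrix.det_fin_two_of]
    rw [hinv]
    ext i j
    fin_cases i <;> fin_cases j <;>
      simp [Nminus, Matrix.mul_apply, Fin.sum_univ_two] <;>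
      field_simp <;> ring_nf <;> simp [Complex.I_sq] <;> ring
  · rw [hΨ1 0 le_rfl, hΨ2 0 le_rfl]
    have hki : (k : ℂ) ≠ 0 := by exact_mod_cast hk
    rw [Matrix.det_mul]
    have h1 : (Nplus A k).det = 1 := by simp [Nplus, Matrix.det_fin_two_of]
    have h2 : (Nminus A k).det = 1 := by simp [Nminus, Matrix.det_fin_two_of]
    rw [Matrix.det_nonsing_inv, h1, h2]
    simp
end
end

section
/- Let k ∈ ℝ \ {0} and t ∈ ℝ, and suppose that for the potential q the matrix function x ↦ Ψ₁(x,t,-k) satisfies the Jost integral equation (J1) with spectral parameter -k for every x ∈ ℝ, with all integrals absolutely convergent. Then the matrix function Ψ̃₂(x,t,k) := Λ · conj(Ψ₁(-x,t,-k)) · Λ (entrywise complex conjugation), where Λ = [[0,1],[1,0]], satisfies the Jost integral equation (J2) with spectral parameter k for every x ∈ ℝ. -/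
open MeasureTheory

noncomputable section

def Lambda : Matrix (Fin 2) (Fin 2) ℂ := !![0, 1; 1, 0]

/-- The symmetry `Ψ̃₂(x,t,k) := Λ · conj(Ψ₁(-x,t,-k)) · Λ`. -/
def symmPsi (Ψ₁ : ℝ → Matrix (Fin 2) (Fin 2) ℂ) (x : ℝ) : Matrix (Fin 2) (Fin 2) ℂ :=
  Lambda * (Ψ₁ (-x)).map (starRingEnd ℂ) * Lambda

lemma Phiplus_inv (A x t k : ℝ) : (Phiplus A x t k)⁻¹ =
    !![Complex.exp (Complex.I * k * x + 2 * Complex.I * k ^ 2 * t),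
       -((A : ℂ) / (2 * Complex.I * k)) * Complex.exp (Complex.I * k * x + 2 * Complex.I * k ^ 2 * t);
       0, Complex.exp (-(Complex.I * k * x + 2 * Complex.I * k ^ 2 * t))] := by
  apply Matrix.inv_eq_right_inv
  have h1 : Complex.exp (-(Complex.I * k * x + 2 * Complex.I * k ^ 2 * t)) *
      Complex.exp (Complex.I * k * x + 2 * Complex.I * k ^ 2 * t) = 1 := by
    rw [← Complex.exp_add]; ring_nf; exact Complex.exp_zero
  simp only [Phiplus, Nplus, expSigma3, neg_neg, Matrix.mul_fin_two]
  rw [Matrix.one_fin_two]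
  congr 1 <;> ring_nf <;> ring_nf at h1 <;> simp [h1]

lemma Phiminus_inv (A x t k : ℝ) : (Phiminus A x t k)⁻¹ =
    !![Complex.exp (Complex.I * k * x + 2 * Complex.I * k ^ 2 * t), 0;
       -((A : ℂ) / (2 * Complex.I * k)) * Complex.exp (-(Complex.I * k * x + 2 * Complex.I * k ^ 2 * t)),
       Complex.exp (-(Complex.I * k * x + 2 * Complex.I * k ^ 2 * t))] := by
  apply Matrix.inv_eq_right_inv
  have h1 : Complex.exp (-(Complex.I * k * x + 2 * Complex.I * k ^ 2 * t)) *
      Complex.exp (Complex.I * k * x + 2 * Complex.I * k ^ 2 * t) = 1 := by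
    rw [← Complex.exp_add]; ring_nf; exact Complex.exp_zero
  simp only [Phiminus, Nminus, expSigma3, neg_neg, Matrix.mul_fin_two]
  rw [Matrix.one_fin_two]
  congr 1 <;> ring_nf <;> ring_nf at h1 <;> simp [h1]

lemma Gplus_eq (A x y t k : ℝ) : Gplus A x y t k =
    !![Complex.exp (-(Complex.I * k * (x - y))),
       ((A : ℂ) / (2 * Complex.I * k)) *
         (Complex.exp (Complex.I * k * (x - y)) - Complex.exp (-(Complex.I * k * (x - y))));
       0, Complex.exp (Complex.I * k * (x - y))] := by
  have e1 : Complex.exp (-(Complex.I * k * x + 2 * Complex.I * k ^ 2 * t)) *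
      Complex.exp (Complex.I * k * y + 2 * Complex.I * k ^ 2 * t)
      = Complex.exp (-(Complex.I * k * (x - y))) := by rw [← Complex.exp_add]; congr 1; ring
  have e2 : Complex.exp (Complex.I * k * x + 2 * Complex.I * k ^ 2 * t) *
      Complex.exp (-(Complex.I * k * y + 2 * Complex.I * k ^ 2 * t))
      = Complex.exp (Complex.I * k * (x - y)) := by rw [← Complex.exp_add]; congr 1; ring
  rw [Gplus, Phiplus_inv]
  simp only [Phiplus, Nplus, expSigma3, neg_neg, Matrix.mul_fin_two]
  set a : ℂ := (A : ℂ) / (2 * Complex.I * k)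
  ext i j
  fin_cases i <;> fin_cases j <;>
    simp only [Fin.zero_eta, Fin.mk_one, Fin.isValue, Matrix.cons_val', Matrix.cons_val_zero,
      Matrix.cons_val_one, Matrix.head_cons, Matrix.head_fin_const, Matrix.empty_val',
      Matrix.cons_val_fin_one, Matrix.of_apply]
  · linear_combination e1
  · linear_combination a * e2 - a * e1
  · ring
  · linear_combination e2

lemma Gminus_eq (A x y t k : ℝ) : Gminus A x y t k =
    !![Complex.exp (-(Complex.I * k * (x - y))), 0;
       ((A : ℂ) / (2 * Complex.I * k)) *
         (Complex.exp (-(Complex.I * k * (x - y))) - Complex.exp (Complex.I * k * (x - y))),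
       Complex.exp (Complex.I * k * (x - y))] := by
  have e1 : Complex.exp (-(Complex.I * k * x + 2 * Complex.I * k ^ 2 * t)) *
      Complex.exp (Complex.I * k * y + 2 * Complex.I * k ^ 2 * t)
      = Complex.exp (-(Complex.I * k * (x - y))) := by rw [← Complex.exp_add]; congr 1; ring
  have e2 : Complex.exp (Complex.I * k * x + 2 * Complex.I * k ^ 2 * t) *
      Complex.exp (-(Complex.I * k * y + 2 * Complex.I * k ^ 2 * t))
      = Complex.exp (Complex.I * k * (x - y)) := by rw [← Complex.exp_add]; congr 1; ring
  rw [Gminus, Phiminus_inv]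
  simp only [Phiminus, Nminus, expSigma3, neg_neg, Matrix.mul_fin_two]
  set a : ℂ := (A : ℂ) / (2 * Complex.I * k)
  ext i j
  fin_cases i <;> fin_cases j <;>
    simp only [Fin.zero_eta, Fin.mk_one, Fin.isValue, Matrix.cons_val', Matrix.cons_val_zero,
      Matrix.cons_val_one, Matrix.head_cons, Matrix.head_fin_const, Matrix.empty_val',
      Matrix.cons_val_fin_one, Matrix.of_apply]
  · linear_combination e1
  · ring
  · linear_combination a * e1 - a * e2
  · linear_combination e2

lemma symmPsi_apply (Ψ₁ : ℝ → Matrix (Fin 2) (Fin 2) ℂ) (z : ℝ) : symmPsi Ψ₁ z =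
    !![(starRingEnd ℂ) (Ψ₁ (-z) 1 1), (starRingEnd ℂ) (Ψ₁ (-z) 1 0);
       (starRingEnd ℂ) (Ψ₁ (-z) 0 1), (starRingEnd ℂ) (Ψ₁ (-z) 0 0)] := by
  rw [symmPsi, Lambda, Matrix.eta_fin_two ((Ψ₁ (-z)).map (starRingEnd ℂ))]
  simp [Matrix.mul_fin_two, Matrix.map_apply]


lemma key (A : ℝ) (q : ℝ → ℝ → ℂ) (Ψ₁ : ℝ → Matrix (Fin 2) (Fin 2) ℂ) (t k x z : ℝ) (i j : Fin 2) :
    jostIntegrand2 A q (symmPsi Ψ₁) x t k z i j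
      = - (starRingEnd ℂ) (jostIntegrand1 A q Ψ₁ (-x) t (-k) (-z) (![1,0] i) (![1,0] j)) := by
  have hV2 : Umat q z t - Uplus A = !![0, q z t - (A : ℂ); -(starRingEnd ℂ) (q (-z) t), 0] := by
    ext i j; fin_cases i <;> fin_cases j <;> simp [Umat, Uplus]
  have hV1 : Umat q (-z) t - Uminus A
      = !![0, q (-z) t; -(starRingEnd ℂ) (q (- -z) t) + (A : ℂ), 0] := by
    ext i j; fin_cases i <;> fin_cases j <;> simp [Umat, Uminus, sub_eq_add_neg]
  rw [jostIntegrand1, jostIntegrand2, Gplus_eq, Gminus_eq, symmPsi_apply, hV1, hV2]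
  rw [Matrix.eta_fin_two (Ψ₁ (-z))]
  fin_cases i <;> fin_cases j <;>
  · simp only [expSigma3, Matrix.mul_fin_two, Fin.zero_eta, Fin.mk_one,
      Fin.isValue, Matrix.cons_val', Matrix.cons_val_zero, Matrix.cons_val_one, Matrix.head_cons,
      Matrix.head_fin_const, Matrix.empty_val', Matrix.cons_val_fin_one, Matrix.of_apply,
      map_add, map_mul, map_sub, map_neg, map_div₀, map_ofNat, Complex.conj_I,
      Complex.conj_ofReal, Complex.conj_conj, ← Complex.exp_conj, Complex.ofReal_neg, neg_neg,
      map_zero, mul_zero, zero_mul, add_zero, zero_add, one_mul, mul_one, sub_zero, neg_zero]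
    push_cast
    ring

/-- If `x ↦ Ψ₁(x,t,-k)` satisfies the Jost integral equation (J1) with spectral parameter `-k`
(with absolutely convergent integrals), then `Ψ̃₂(x,t,k) = Λ·conj(Ψ₁(-x,t,-k))·Λ` satisfies the
Jost integral equation (J2) with spectral parameter `k` (with absolutely convergent integrals). -/
theorem stmt2 (A : ℝ) (hA : 0 < A) (k : ℝ) (hk : k ≠ 0) (t : ℝ)
    (q : ℝ → ℝ → ℂ) (Ψ₁ : ℝ → Matrix (Fin 2) (Fin 2) ℂ)
    (hint1 : ∀ x : ℝ, ∀ i j : Fin 2,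
      IntegrableOn (fun y => jostIntegrand1 A q Ψ₁ x t (-k) y i j) (Set.Iic x))
    (hJ1 : ∀ x : ℝ, ∀ i j : Fin 2,
      Ψ₁ x i j = Nminus A (-k) i j + ∫ y in Set.Iic x, jostIntegrand1 A q Ψ₁ x t (-k) y i j) :
    ∀ x : ℝ, ∀ i j : Fin 2,
      IntegrableOn (fun y => jostIntegrand2 A q (symmPsi Ψ₁) x t k y i j) (Set.Ici x) ∧
      symmPsi Ψ₁ x i j
        = Nplus A k i j - ∫ y in Set.Ici x, jostIntegrand2 A q (symmPsi Ψ₁) x t k y i j := by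
  intro x i j
  have hemb : MeasurableEmbedding (fun z : ℝ => -z) :=
    (Homeomorph.neg ℝ).isClosedEmbedding.measurableEmbedding
  have hmap : Measure.map (fun z : ℝ => -z) (volume.restrict (Set.Ici x))
      = volume.restrict (Set.Iic (-x)) := by
    rw [← Measure.map_neg_eq_self (volume : Measure ℝ),
      Measure.restrict_map measurable_neg measurableSet_Iic]
    congr 1
    ext z
    simp
  have hf : IntegrableOn
      (fun y => jostIntegrand1 A q Ψ₁ (-x) t (-k) y (![1,0] i) (![1,0] j)) (Set.Iic (-x)) :=
    hint1 (-x) (![1,0] i) (![1,0] j)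
  have hconj : IntegrableOn
      (fun y => (starRingEnd ℂ) (jostIntegrand1 A q Ψ₁ (-x) t (-k) y (![1,0] i) (![1,0] j)))
      (Set.Iic (-x)) := by
    simpa [IntegrableOn] using Complex.conjLIE.integrable_comp_iff.mpr hf
  have hcompneg : IntegrableOn
      (fun z => (starRingEnd ℂ) (jostIntegrand1 A q Ψ₁ (-x) t (-k) (-z) (![1,0] i) (![1,0] j)))
      (Set.Ici x) := by
    have h := (hemb.integrable_map_iff
      (g := fun y => (starRingEnd ℂ)
        (jostIntegrand1 A q Ψ₁ (-x) t (-k) y (![1,0] i) (![1,0] j)))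
      (μ := volume.restrict (Set.Ici x))).mp (by rw [hmap]; exact hconj)
    simpa [Function.comp_def, IntegrableOn] using h
  have hfun : (fun z => jostIntegrand2 A q (symmPsi Ψ₁) x t k z i j)
      = fun z => -((starRingEnd ℂ)
          (jostIntegrand1 A q Ψ₁ (-x) t (-k) (-z) (![1,0] i) (![1,0] j))) :=
    funext fun z => key A q Ψ₁ t k x z i j
  constructor
  · rw [IntegrableOn, hfun]
    exact hcompneg.neg
  · have hInt : (∫ z in Set.Ici x, jostIntegrand2 A q (symmPsi Ψ₁) x t k z i j)
        = -(starRingEnd ℂ)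
            (∫ y in Set.Iic (-x), jostIntegrand1 A q Ψ₁ (-x) t (-k) y (![1,0] i) (![1,0] j)) := by
      rw [hfun, integral_neg, MeasureTheory.integral_Ici_eq_integral_Ioi,
        integral_comp_neg_Ioi x (fun y => (starRingEnd ℂ)
          (jostIntegrand1 A q Ψ₁ (-x) t (-k) y (![1,0] i) (![1,0] j))), integral_conj]
    rw [hInt, sub_neg_eq_add]
    have hsym : symmPsi Ψ₁ x i j = (starRingEnd ℂ) (Ψ₁ (-x) (![1,0] i) (![1,0] j)) := by
      fin_cases i <;> fin_cases j <;> simp [symmPsi_apply]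
    have hN : (starRingEnd ℂ) (Nminus A (-k) (![1,0] i) (![1,0] j)) = Nplus A k i j := by
      fin_cases i <;> fin_cases j <;>
        · simp [Nminus, Nplus, map_div₀, Complex.conj_I, Complex.conj_ofReal, map_ofNat]
          try push_cast
          try ring
    rw [hsym, hJ1 (-x) (![1,0] i) (![1,0] j), map_add, hN]
end
end

section
/- Let a₁₁ and a₂₁ be nonzero complex numbers. Let a₁, a₂, b be complex-valued functions on (-δ,δ)\{0} ⊂ ℝ for some δ > 0 such that a₁(k) = a₁₁/k + O(1) and a₂(k) = a₂₁·k + O(k²) as k → 0, a₁ and a₂ are nonvanishing for k ≠ 0, and a₁(k)·a₂(k) + b(k)·conj(b(-k)) = 1 for all k ≠ 0. Then 1 + r₁(k)·r₂(k) = 1/(a₁₁·a₂₁) + O(k) as k → 0, k ∈ ℝ\{0}. -/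
open Filter Asymptotics Topology

noncomputable section

/-- Case II behavior of `1 + r₁(k)r₂(k)` at `k = 0`, where `r₁ = b/a₁`, `r₂ = conj(b(-·))/a₂`:
if `a₁(k) = a₁₁/k + O(1)`, `a₂(k) = a₂₁·k + O(k²)` as `k → 0` (with `a₁₁, a₂₁ ≠ 0`), `a₁, a₂`
are nonvanishing and `a₁a₂ + b·conj(b(-·)) = 1` on a punctured neighborhood of `0` in `ℝ`, then
`1 + r₁(k)r₂(k) = 1/(a₁₁·a₂₁) + O(k)` as `k → 0`, `k ≠ 0`. -/
theorem stmt14 (a₁₁ a₂₁ : ℂ) (ha₁₁ : a₁₁ ≠ 0) (ha₂₁ : a₂₁ ≠ 0)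
    (a₁ a₂ b : ℝ → ℂ)
    (h1 : (fun k : ℝ => a₁ k - a₁₁ / (k : ℂ)) =O[𝓝[≠] (0 : ℝ)] fun _ => (1 : ℂ))
    (h2 : (fun k : ℝ => a₂ k - a₂₁ * (k : ℂ)) =O[𝓝[≠] (0 : ℝ)] fun k => (k : ℂ) ^ 2)
    (h3 : ∀ᶠ k : ℝ in 𝓝[≠] (0 : ℝ),
      a₁ k ≠ 0 ∧ a₂ k ≠ 0 ∧ a₁ k * a₂ k + b k * (starRingEnd ℂ) (b (-k)) = 1) :
    (fun k : ℝ =>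
        (1 + (b k / a₁ k) * ((starRingEnd ℂ) (b (-k)) / a₂ k)) - 1 / (a₁₁ * a₂₁))
      =O[𝓝[≠] (0 : ℝ)] fun k => (k : ℂ) := by
  set l := 𝓝[≠] (0 : ℝ) with hl
  set c := a₁₁ * a₂₁ with hcdef
  have hcne : c ≠ 0 := mul_ne_zero ha₁₁ ha₂₁
  have hk : ∀ᶠ k : ℝ in l, k ≠ 0 := self_mem_nhdsWithin
  -- k → 0 in ℂ along l
  have htk : Tendsto (fun k : ℝ => (k : ℂ)) l (𝓝 0) := by
    have : Tendsto (fun k : ℝ => (k : ℂ)) (𝓝 (0 : ℝ)) (𝓝 ((0 : ℝ) : ℂ)) :=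
      Complex.continuous_ofReal.tendsto 0
    simpa using this.mono_left nhdsWithin_le_nhds
  have hkO1 : (fun k : ℝ => (k : ℂ)) =O[l] (fun _ => (1 : ℂ)) := htk.isBigO_one ℂ
  have hk2 : (fun k : ℝ => (k : ℂ) ^ 2) =O[l] (fun k : ℝ => (k : ℂ)) := by
    have := hkO1.mul (isBigO_refl (fun k : ℝ => (k : ℂ)) l)
    simpa [sq] using this
  -- a₂ = O(k)
  have ha₂O : (fun k : ℝ => a₂ k) =O[l] (fun k : ℝ => (k : ℂ)) := by
    have h' : (fun k : ℝ => a₂₁ * (k : ℂ)) =O[l] (fun k : ℝ => (k : ℂ)) :=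
      (isBigO_refl (fun k : ℝ => (k : ℂ)) l).const_mul_left a₂₁
    have := (h2.trans hk2).add h'
    simpa using this
  -- (a₁₁/k)·(a₂ - a₂₁ k) = O(k)
  have hinv : (fun k : ℝ => a₁₁ / (k : ℂ)) =O[l] (fun k : ℝ => ((k : ℂ))⁻¹) :=
    (isBigO_refl (fun k : ℝ => ((k : ℂ))⁻¹) l).const_mul_left a₁₁ |>.congr_left
      (fun k => by rw [div_eq_mul_inv])
  have hB : (fun k : ℝ => a₁₁ / (k : ℂ) * (a₂ k - a₂₁ * k)) =O[l] (fun k : ℝ => (k : ℂ)) := by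
    have := hinv.mul h2
    refine this.trans (IsBigO.of_bound 1 ?_)
    filter_upwards [hk] with k hk0
    have hkc : (k : ℂ) ≠ 0 := by exact_mod_cast hk0
    have : ((k : ℂ))⁻¹ * (k : ℂ) ^ 2 = (k : ℂ) := by
      rw [sq, inv_mul_cancel_left₀ hkc]
    simp [this]
  -- P = a₁·a₂, P - c = O(k)
  have hP : (fun k : ℝ => a₁ k * a₂ k - c) =O[l] (fun k : ℝ => (k : ℂ)) := by
    have heq : ∀ᶠ k : ℝ in l,
        a₁ k * a₂ k - c = (a₁ k - a₁₁ / k) * a₂ k + a₁₁ / k * (a₂ k - a₂₁ * k) := by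
      filter_upwards [hk] with k hk0
      have hkc : (k : ℂ) ≠ 0 := by exact_mod_cast hk0
      field_simp
      ring
    have h1' : (fun k : ℝ => (a₁ k - a₁₁ / k) * a₂ k) =O[l] (fun k : ℝ => (k : ℂ)) := by
      have := h1.mul ha₂O
      simpa using this
    exact (IsBigO.congr' (h1'.add hB) (EventuallyEq.symm heq) (by rfl))
  -- P → c, hence P⁻¹ = O(1)
  have hPt : Tendsto (fun k : ℝ => a₁ k * a₂ k) l (𝓝 c) := by
    have h0 : Tendsto (fun k : ℝ => a₁ k * a₂ k - c) l (𝓝 0) := hP.trans_tendsto htk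
    have := h0.add_const c
    simpa using this
  have hPinv : (fun k : ℝ => (a₁ k * a₂ k)⁻¹) =O[l] (fun _ => (1 : ℂ)) :=
    (hPt.inv₀ hcne).isBigO_one ℂ
  -- target =ᶠ c⁻¹ * (c - P) * P⁻¹
  have heq2 : (fun k : ℝ =>
      (1 + (b k / a₁ k) * ((starRingEnd ℂ) (b (-k)) / a₂ k)) - 1 / c)
      =ᶠ[l] fun k : ℝ => c⁻¹ * (c - a₁ k * a₂ k) * (a₁ k * a₂ k)⁻¹ := by
    filter_upwards [h3] with k ⟨ha1, ha2, hrel⟩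
    have hPne : a₁ k * a₂ k ≠ 0 := mul_ne_zero ha1 ha2
    have hbB : b k * (starRingEnd ℂ) (b (-k)) = 1 - a₁ k * a₂ k := by
      linear_combination hrel
    have h4 : 1 + (b k / a₁ k) * ((starRingEnd ℂ) (b (-k)) / a₂ k) = (a₁ k * a₂ k)⁻¹ := by
      rw [div_mul_div_comm, hbB]
      field_simp
      ring
    rw [h4, one_div, mul_sub, inv_mul_cancel₀ hcne, sub_mul, one_mul,
      mul_assoc, mul_inv_cancel₀ hPne, mul_one]
  have hsub : (fun k : ℝ => c - a₁ k * a₂ k) =O[l] (fun k : ℝ => (k : ℂ)) := by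
    have := hP.neg_left
    simpa [neg_sub] using this
  have hfin : (fun k : ℝ => c⁻¹ * (c - a₁ k * a₂ k) * (a₁ k * a₂ k)⁻¹)
      =O[l] (fun k : ℝ => (k : ℂ)) := by
    have := (hsub.const_mul_left c⁻¹).mul hPinv
    simpa using this
  exact heq2.trans_isBigO hfin
end
end
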